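/- arXiv:1511.04039 — 2 statements merged into one kernel-verified Lean document; each statement's English description precedes it below -/
import Mathlib

section
/- A polynomial sequence (p_n)_{n≥0} with deg p_i = i for all i is of binomial type if and only if it is the generalized Gončarov basis associated with (𝔡, O) for some delta operator 𝔡, where O is the zero grid. -/
open Polynomial

/-- The shift operator `E_a : K[x] → K[x]`, `f(x) ↦ f(x+a)`, as a linear endomorphism. -/
noncomputable def shiftOp (K : Type*) [Field K] (a : K) : Module.End K (Polynomial K) :=
  (aeval (X + C a) : Polynomial K →ₐ[K] Polynomial K).toLinearMap

/-- A linear operator on `K[x]` is shift-invariant if it commutes with every shift `E_a`. -/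
def IsShiftInvariant {K : Type*} [Field K] (s : Module.End K (Polynomial K)) : Prop :=
  ∀ a : K, s ∘ₗ shiftOp K a = shiftOp K a ∘ₗ s

/-- A delta operator: shift-invariant and sends `X` to a nonzero constant. -/
def IsDeltaOperator {K : Type*} [Field K] (d : Module.End K (Polynomial K)) : Prop :=
  IsShiftInvariant d ∧ ∃ c : K, c ≠ 0 ∧ d X = C c

/-- The sequence of basic polynomials of a delta operator `d`. -/
def IsBasicSequence {K : Type*} [Field K] (d : Module.End K (Polynomial K))
    (p : ℕ → Polynomial K) : Prop :=
  p 0 = 1 ∧ (∀ n, 1 ≤ n → (p n).eval 0 = 0) ∧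
    ∀ n, 1 ≤ n → d (p n) = (n : K) • p (n - 1)

/-- The generalized Gončarov basis associated with the pair `(d, z)`:
`deg t_n = n` and `ε_{z_i}(d^i t_n) = n! δ_{i,n}`. -/
def IsGoncarovBasis {K : Type*} [Field K] (d : Module.End K (Polynomial K))
    (z : ℕ → K) (t : ℕ → Polynomial K) : Prop :=
  ∀ n, (t n).natDegree = n ∧
    ∀ i, ((d ^ i) (t n)).eval (z i) = if i = n then (n.factorial : K) else 0

set_option linter.unusedSectionVars false
set_option linter.unusedVariables false

section Aux

variable {K : Type*} [Field K]

lemma shiftOp_apply (a : K) (f : Polynomial K) : shiftOp K a f = f.comp (X + C a) := by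
  simp [shiftOp, aeval_def, comp, Polynomial.algebraMap_eq]

lemma pow_shift_comm {d : Module.End K (Polynomial K)} (hd : IsShiftInvariant d)
    (i : ℕ) (a : K) (f : Polynomial K) :
    (d ^ i) (shiftOp K a f) = shiftOp K a ((d ^ i) f) := by
  induction i with
  | zero => simp
  | succ i ih =>
    rw [pow_succ', Module.End.mul_apply, Module.End.mul_apply, ih, ← LinearMap.comp_apply,
      hd a, LinearMap.comp_apply]

lemma pne {p : ℕ → Polynomial K} (hdeg : ∀ i, (p i).natDegree = i) (h0 : p 0 ≠ 0) :
    ∀ i, p i ≠ 0 := by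
  intro i
  rcases Nat.eq_zero_or_pos i with h | h
  · subst h; exact h0
  · intro hz; have := hdeg i; rw [hz] at this; simp at this; omega

lemma pLI {p : ℕ → Polynomial K} (hdeg : ∀ i, (p i).natDegree = i) (h0 : p 0 ≠ 0) :
    LinearIndependent K p := by
  rw [linearIndependent_iff']
  intro s
  induction s using Finset.strongInduction with
  | _ s ih =>
    intro g hsum i hi
    have hne : s.Nonempty := ⟨i, hi⟩
    set m := s.max' hne with hm
    have hmax : ∀ j ∈ s, j ≤ m := fun j hj => Finset.le_max' s j hj
    have hgm : g m = 0 := by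
      have hc := congrArg (fun q => q.coeff m) hsum
      simp only [Polynomial.finset_sum_coeff, Polynomial.coeff_smul, Polynomial.coeff_zero] at hc
      rw [Finset.sum_eq_single m] at hc
      · have hlc : (p m).coeff m ≠ 0 := by
          have := Polynomial.coeff_ne_zero_of_eq_degree (p := p m) (n := m) ?_
          · exact this
          · rw [Polynomial.degree_eq_natDegree (pne hdeg h0 m), hdeg m]
        simpa [smul_eq_mul, hlc] using hc
      · intro j hj hjm
        have : (p j).coeff m = 0 := by
          apply Polynomial.coeff_eq_zero_of_natDegree_lt
          rw [hdeg]; exact lt_of_le_of_ne (hmax j hj) hjm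
        simp [this]
      · intro h; exact absurd (s.max'_mem hne) h
    have hmem : m ∈ s := s.max'_mem hne
    have hsum' : ∑ j ∈ s.erase m, g j • p j = 0 := by
      have h2 := Finset.add_sum_erase s (fun j => g j • p j) hmem
      rw [← h2] at hsum
      simp only [hgm, zero_smul, zero_add] at hsum
      exact hsum
    rcases eq_or_ne i m with rfl | him
    · exact hgm
    · exact ih (s.erase m) (Finset.erase_ssubset hmem) g hsum' i (Finset.mem_erase.mpr ⟨him, hi⟩)

lemma pSpan {p : ℕ → Polynomial K} (hdeg : ∀ i, (p i).natDegree = i) (h0 : p 0 ≠ 0) :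
    ⊤ ≤ Submodule.span K (Set.range p) := by
  have key : ∀ n (f : Polynomial K), f.natDegree ≤ n → f ∈ Submodule.span K (Set.range p) := by
    intro n
    induction n with
    | zero =>
      intro f hf
      obtain ⟨a, rfl⟩ := Polynomial.natDegree_eq_zero.mp (Nat.le_zero.mp hf)
      obtain ⟨c, hc⟩ := Polynomial.natDegree_eq_zero.mp (hdeg 0)
      have hcne : c ≠ 0 := by rintro rfl; simp at hc; exact h0 hc.symm
      have : C a = (a / c) • p 0 := by
        rw [← hc, Polynomial.smul_C, smul_eq_mul, div_mul_cancel₀ _ hcne]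
      rw [this]
      exact Submodule.smul_mem _ _ (Submodule.subset_span ⟨0, rfl⟩)
    | succ n ih =>
      intro f hf
      set c := f.coeff (n+1) / (p (n+1)).coeff (n+1) with hcdef
      have hg : (f - c • p (n+1)).natDegree ≤ n := by
        rw [Polynomial.natDegree_le_iff_coeff_eq_zero]
        intro N hN
        rcases eq_or_lt_of_le (Nat.succ_le_of_lt hN) with h | h
        · have hlc : (p (n+1)).coeff (n+1) ≠ 0 := by
            have h := Polynomial.leadingCoeff_ne_zero.mpr (pne hdeg h0 (n+1))
            rwa [Polynomial.leadingCoeff, hdeg (n+1)] at h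
          simp only [Polynomial.coeff_sub, Polynomial.coeff_smul, ← h, smul_eq_mul, hcdef]
          field_simp
          simp
        · have h1 : f.coeff N = 0 :=
            Polynomial.coeff_eq_zero_of_natDegree_lt (lt_of_le_of_lt hf h)
          have h2 : (p (n+1)).coeff N = 0 :=
            Polynomial.coeff_eq_zero_of_natDegree_lt (by rw [hdeg]; exact h)
          simp [h1, h2]
      have hmem : c • p (n+1) ∈ Submodule.span K (Set.range p) :=
        Submodule.smul_mem _ _ (Submodule.subset_span ⟨n+1, rfl⟩)
      have : f = (f - c • p (n+1)) + c • p (n+1) := by ring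
      rw [this]
      exact Submodule.add_mem _ (ih _ hg) hmem
  intro f _
  exact key f.natDegree f le_rfl

noncomputable def pBasis {p : ℕ → Polynomial K} (hdeg : ∀ i, (p i).natDegree = i)
    (h0 : p 0 ≠ 0) : Module.Basis ℕ K (Polynomial K) :=
  Module.Basis.mk (pLI hdeg h0) (pSpan hdeg h0)

lemma pBasis_apply {p : ℕ → Polynomial K} (hdeg : ∀ i, (p i).natDegree = i)
    (h0 : p 0 ≠ 0) (n : ℕ) : pBasis hdeg h0 n = p n := Module.Basis.mk_apply _ _ _


lemma dpow_of_act {p : ℕ → Polynomial K} {d : Module.End K (Polynomial K)}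
    (hdact : ∀ n, d (p n) = (n : K) • p (n - 1)) :
    ∀ n i, (d ^ i) (p n) = (n.descFactorial i : K) • p (n - i) := by
  intro n i
  induction i with
  | zero => simp
  | succ i ih =>
    rw [pow_succ', Module.End.mul_apply, ih, map_smul, hdact, Nat.descFactorial_succ,
      smul_smul, Nat.sub_sub, Nat.cast_mul]
    ring_nf

end Aux

section Fwd

variable {K : Type*} [Field K] [CharZero K] {p : ℕ → Polynomial K}
  (hdeg : ∀ i, (p i).natDegree = i)
  (hbin : ∀ (n : ℕ) (y : K), (p n).comp (X + C y) =
      ∑ k ∈ Finset.range (n + 1), (n.choose k : K) • ((p (n - k)).eval y • p k))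

include hdeg hbin

omit [CharZero K] in
lemma fwd_p0 : p 0 = 1 := by
  obtain ⟨c, hc⟩ := Polynomial.natDegree_eq_zero.mp (hdeg 0)
  have h0 := hbin 0 0
  have h1 := hbin 1 0
  simp [Finset.sum_range_succ] at h0 h1
  have hcne : c ≠ 0 := by
    rintro rfl
    have hp0 : p 0 = 0 := by rw [← hc]; simp
    have hp1 : p 1 = 0 := by
      rw [h1, hp0]
      simp
    have hd1 := hdeg 1
    rw [hp1] at hd1
    simp at hd1
  have heval : (p 0).eval 0 = c := by rw [← hc]; simp
  rw [heval, ← hc, Polynomial.smul_C, smul_eq_mul] at h0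
  have hcc : c = c * c := Polynomial.C_inj.mp h0
  have hc1 : (1 : K) = c := by
    apply mul_left_cancel₀ hcne
    rw [mul_one, ← hcc]
  rw [← hc, ← hc1, map_one]

lemma fwd_eval0 : ∀ n, 1 ≤ n → (p n).eval 0 = 0 := by
  intro n
  induction n using Nat.strong_induction_on with
  | _ n ih =>
    intro hn
    have hp0 : p 0 = 1 := fwd_p0 hdeg hbin
    obtain ⟨m, rfl⟩ : ∃ m, n = m + 1 := ⟨n - 1, by omega⟩
    have h := congrArg (Polynomial.eval 0) (hbin (m+1) 0)
    simp only [map_zero, add_zero, Polynomial.comp_X, Polynomial.eval_finset_sum,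
      Polynomial.eval_smul, smul_eq_mul] at h
    rw [Finset.sum_range_succ', Finset.sum_range_succ] at h
    have hmid : ∑ k ∈ Finset.range m, ((m+1).choose (k+1) : K) *
        ((p (m+1 - (k+1))).eval 0 * (p (k+1)).eval 0) = 0 := by
      apply Finset.sum_eq_zero
      intro k hk
      have hk' : k < m := Finset.mem_range.mp hk
      have : (p (k+1)).eval 0 = 0 := ih (k+1) (by omega) (by omega)
      simp [this]
    rw [hmid] at h
    simp only [hp0, Polynomial.eval_one, mul_one, one_mul, Nat.add_sub_cancel,
      Nat.sub_zero, Nat.sub_self, Nat.choose_self, Nat.choose_zero_right, Nat.cast_one, zero_add] at h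
    exact left_eq_add.mp h


lemma fwd_shift (hp0 : p 0 = 1) (h0 : p 0 ≠ 0) {d : Module.End K (Polynomial K)}
    (hdact : ∀ n, d (p n) = (n : K) • p (n - 1)) :
    IsShiftInvariant d := by
  intro a
  apply Module.Basis.ext (pBasis hdeg h0)
  intro n
  rw [pBasis_apply]
  simp only [LinearMap.comp_apply]
  rw [shiftOp_apply, hbin n a, map_sum, hdact]
  cases n with
  | zero =>
    simp [hdact]
  | succ m =>
    rw [map_smul, shiftOp_apply]
    simp only [Nat.add_sub_cancel]
    rw [hbin m a, Finset.smul_sum, Finset.sum_range_succ']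
    simp only [map_smul, hdact]
    simp only [Nat.cast_zero, zero_smul, smul_zero, add_zero, Nat.succ_sub_succ,
      Nat.add_sub_cancel, Nat.cast_add, Nat.cast_one]
    apply Finset.sum_congr rfl
    intro k hk
    simp only [smul_smul]
    congr 1
    have hnat : ((m+1).choose (k+1) * (k+1) : ℕ) = ((m+1) * m.choose k : ℕ) :=
      (Nat.add_one_mul_choose_eq m k).symm
    have hK : (((m+1).choose (k+1) : K)) * ((k : K) + 1) = ((m : K) + 1) * (m.choose k : K) := by
      exact_mod_cast congrArg (Nat.cast : ℕ → K) hnat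
    calc ((m+1).choose (k+1) : K) * ((p (m - k)).eval a * ((k : K) + 1))
        = (((m+1).choose (k+1) : K) * ((k : K) + 1)) * (p (m - k)).eval a := by ring
      _ = (((m : K) + 1) * (m.choose k : K)) * (p (m - k)).eval a := by rw [hK]
      _ = ((m : K) + 1) * ((m.choose k : K) * (p (m - k)).eval a) := by ring

lemma fwd_dX (hp0 : p 0 = 1) (h0 : p 0 ≠ 0) {d : Module.End K (Polynomial K)}
    (hdact : ∀ n, d (p n) = (n : K) • p (n - 1)) :
    ∃ c : K, c ≠ 0 ∧ d X = C c := by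
  have h1 : p 1 = C ((p 1).coeff 1) * X + C ((p 1).coeff 0) :=
    Polynomial.eq_X_add_C_of_natDegree_le_one (le_of_eq (hdeg 1))
  set α := (p 1).coeff 1 with hα'
  set β := (p 1).coeff 0 with hβ'
  have hα : α ≠ 0 := by
    have h := Polynomial.leadingCoeff_ne_zero.mpr (pne hdeg h0 1)
    rwa [Polynomial.leadingCoeff, hdeg 1] at h
  have hCC : C α⁻¹ * C α = 1 := by rw [← Polynomial.C_mul, inv_mul_cancel₀ hα, Polynomial.C_1]
  have hX : X = α⁻¹ • p 1 - (α⁻¹ * β) • p 0 := by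
    rw [h1, hp0, Polynomial.smul_eq_C_mul, Polynomial.smul_eq_C_mul, Polynomial.C_mul]
    calc X = (C α⁻¹ * C α) * X + (C α⁻¹ * C β - C α⁻¹ * C β) := by rw [hCC]; ring
      _ = C α⁻¹ * (C α * X + C β) - C α⁻¹ * C β * 1 := by ring
  refine ⟨α⁻¹, inv_ne_zero hα, ?_⟩
  rw [hX, map_sub, map_smul, map_smul, hdact, hdact]
  simp [hp0, Polynomial.smul_eq_C_mul]

lemma fwd_gon (hp0 : p 0 = 1) (h0 : p 0 ≠ 0) {d : Module.End K (Polynomial K)}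
    (hdact : ∀ n, d (p n) = (n : K) • p (n - 1)) :
    IsGoncarovBasis d (fun _ => (0 : K)) p := by
  intro n
  refine ⟨hdeg n, fun i => ?_⟩
  rw [dpow_of_act hdact]
  simp only [Polynomial.eval_smul, smul_eq_mul]
  by_cases h : i = n
  · subst h
    simp [Nat.descFactorial_self, hp0]
  · rw [if_neg h]
    rcases lt_or_gt_of_ne h with hlt | hgt
    · rw [fwd_eval0 hdeg hbin (n - i) (by omega), mul_zero]
    · rw [Nat.descFactorial_eq_zero_iff_lt.mpr hgt]
      simp

end Fwd


section Conv

variable {K : Type*} [Field K] [CharZero K] {p : ℕ → Polynomial K}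
  (hdeg : ∀ i, (p i).natDegree = i) {d : Module.End K (Polynomial K)}
  (hsh : IsShiftInvariant d) (hgon : IsGoncarovBasis d (fun _ => (0 : K)) p)

include hdeg hsh hgon

lemma conv_p0ne : p 0 ≠ 0 := by
  have h := (hgon 0).2 0
  simp only [pow_zero, Module.End.one_apply, if_pos rfl, Nat.factorial_zero, Nat.cast_one] at h
  intro hz
  rw [hz] at h
  simp at h

lemma conv_repr (h0 : p 0 ≠ 0) (f : Polynomial K) (i : ℕ) :
    (pBasis hdeg h0).repr f i = Polynomial.eval 0 ((d ^ i) f) / (i.factorial : K) := by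
  have key : (Polynomial.leval (0 : K)) ∘ₗ (d ^ i) =
      (i.factorial : K) • (pBasis hdeg h0).coord i := by
    apply Module.Basis.ext (pBasis hdeg h0)
    intro n
    rw [pBasis_apply]
    simp only [LinearMap.comp_apply, Polynomial.leval_apply, LinearMap.smul_apply,
      Module.Basis.coord_apply, smul_eq_mul]
    have hr : (pBasis hdeg h0).repr (p n) = Finsupp.single n 1 := by
      conv_lhs => rw [← pBasis_apply hdeg h0 n]
      exact Module.Basis.repr_self _ n
    have hg := (hgon n).2 i
    simp only at hg
    rw [hg, hr, Finsupp.single_apply]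
    by_cases h : i = n
    · subst h; simp
    · simp [h, Ne.symm h]
  have hf := congrArg (fun L => L f) key
  simp only [LinearMap.comp_apply, Polynomial.leval_apply, LinearMap.smul_apply,
    Module.Basis.coord_apply, smul_eq_mul] at hf
  rw [hf, mul_comm, mul_div_assoc, div_self (by exact_mod_cast i.factorial_ne_zero), mul_one]

lemma conv_dpow (h0 : p 0 ≠ 0) (n i : ℕ) :
    (d ^ i) (p n) = (n.descFactorial i : K) • p (n - i) := by
  apply (pBasis hdeg h0).repr.injective
  ext k
  have hpow : (d ^ k) ((d ^ i) (p n)) = (d ^ (k + i)) (p n) := by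
    rw [pow_add, Module.End.mul_apply]
  have hl : (pBasis hdeg h0).repr ((d ^ i) (p n)) k =
      (if k + i = n then (n.factorial : K) else 0) / (k.factorial : K) := by
    rw [conv_repr hdeg hsh hgon h0, hpow]
    have hg := (hgon n).2 (k + i)
    simp only at hg
    rw [hg]
  have hr : (pBasis hdeg h0).repr (p (n - i)) = Finsupp.single (n - i) 1 := by
    conv_lhs => rw [← pBasis_apply hdeg h0 (n - i)]
    exact Module.Basis.repr_self _ _
  rw [hl, map_smul, hr, Finsupp.smul_apply, Finsupp.single_apply, smul_eq_mul]
  by_cases hin : i ≤ n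
  · by_cases hk : n - i = k
    · rw [if_pos (by omega), if_pos hk]
      have hfac : ((n - i).factorial : K) * (n.descFactorial i : K) = (n.factorial : K) := by
        exact_mod_cast congrArg (Nat.cast : ℕ → K) (Nat.factorial_mul_descFactorial hin)
      rw [← hk, mul_one, ← hfac, mul_comm, mul_div_assoc,
        div_self (by exact_mod_cast (n - i).factorial_ne_zero), mul_one]
    · rw [if_neg (by omega), if_neg hk, zero_div, mul_zero]
  · rw [if_neg (by omega), Nat.descFactorial_eq_zero_iff_lt.mpr (by omega), zero_div,
      Nat.cast_zero, zero_mul]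

lemma conv_bin (h0 : p 0 ≠ 0) (n : ℕ) (y : K) :
    (p n).comp (X + C y) =
      ∑ k ∈ Finset.range (n + 1), (n.choose k : K) • ((p (n - k)).eval y • p k) := by
  apply (pBasis hdeg h0).repr.injective
  ext k
  have hLHS : (pBasis hdeg h0).repr ((p n).comp (X + C y)) k =
      (n.descFactorial k : K) * (p (n - k)).eval y / (k.factorial : K) := by
    rw [← shiftOp_apply, conv_repr hdeg hsh hgon h0, pow_shift_comm hsh,
      conv_dpow hdeg hsh hgon h0, map_smul, shiftOp_apply, Polynomial.eval_smul]
    rw [Polynomial.eval_comp]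
    simp [smul_eq_mul]
  have hRHS : ((pBasis hdeg h0).repr
      (∑ j ∈ Finset.range (n + 1), (n.choose j : K) • ((p (n - j)).eval y • p j))) k =
      if k ∈ Finset.range (n + 1) then (n.choose k : K) * (p (n - k)).eval y else 0 := by
    rw [map_sum]
    rw [Finsupp.finset_sum_apply]
    have : ∀ j ∈ Finset.range (n + 1),
        ((pBasis hdeg h0).repr ((n.choose j : K) • ((p (n - j)).eval y • p j))) k =
        if j = k then (n.choose j : K) * (p (n - j)).eval y else 0 := by
      intro j hj
      have hr : (pBasis hdeg h0).repr (p j) = Finsupp.single j 1 := by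
        conv_lhs => rw [← pBasis_apply hdeg h0 j]
        exact Module.Basis.repr_self _ _
      rw [map_smul, map_smul, hr, Finsupp.smul_apply, Finsupp.smul_apply,
        Finsupp.single_apply, smul_eq_mul, smul_eq_mul]
      by_cases h : j = k
      · rw [if_pos h, if_pos h, mul_one]
      · rw [if_neg h, if_neg h, mul_zero, mul_zero]
    rw [Finset.sum_congr rfl this, Finset.sum_ite_eq' (Finset.range (n + 1)) k
      (fun j => (n.choose j : K) * (p (n - j)).eval y)]
  rw [hLHS, hRHS]
  by_cases hk : k ≤ n
  · rw [if_pos (Finset.mem_range.mpr (by omega))]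
    have hdesc : (n.descFactorial k : K) = (k.factorial : K) * (n.choose k : K) := by
      exact_mod_cast congrArg (Nat.cast : ℕ → K) (Nat.descFactorial_eq_factorial_mul_choose n k)
    rw [hdesc, div_eq_iff (show ((k.factorial : K)) ≠ 0 by exact_mod_cast k.factorial_ne_zero)]
    ring
  · rw [if_neg (by simp only [Finset.mem_range]; omega),
      Nat.descFactorial_eq_zero_iff_lt.mpr (by omega)]
    simp

end Conv

theorem stmt8 {K : Type*} [Field K] [CharZero K] (p : ℕ → Polynomial K)
    (hdeg : ∀ i, (p i).natDegree = i) :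
    (∀ (n : ℕ) (y : K), (p n).comp (X + C y) =
        ∑ k ∈ Finset.range (n + 1), (n.choose k : K) • ((p (n - k)).eval y • p k)) ↔
    ∃ d : Module.End K (Polynomial K),
      IsDeltaOperator d ∧ IsGoncarovBasis d (fun _ => (0 : K)) p := by
  constructor
  · intro hbin
    have hp0 : p 0 = 1 := fwd_p0 hdeg hbin
    have h0 : p 0 ≠ 0 := by rw [hp0]; exact one_ne_zero
    set d : Module.End K (Polynomial K) :=
      (pBasis hdeg h0).constr K (fun n => (n : K) • p (n - 1)) with hd
    have hdact : ∀ n, d (p n) = (n : K) • p (n - 1) := by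
      intro n
      conv_lhs => rw [← pBasis_apply hdeg h0 n]
      exact Module.Basis.constr_basis _ _ _ _
    exact ⟨d, ⟨fwd_shift hdeg hbin hp0 h0 hdact, fwd_dX hdeg hbin hp0 h0 hdact⟩,
      fwd_gon hdeg hbin hp0 h0 hdact⟩
  · rintro ⟨d, ⟨hsh, -⟩, hgon⟩
    intro n y
    exact conv_bin hdeg hsh hgon (conv_p0ne hdeg hsh hgon) n y
end

section
/- Perturbation formula: let Z and Z′ be grids with z_k ≠ z′_k for one index k and z_i = z′_i for all i ≠ k. Then t_n(x; 𝔡, Z′) = t_n(x; 𝔡, Z) for n ≤ k, and for n > k, t_n(x; 𝔡, Z′) = t_n(x; 𝔡, Z) − C(n,k)·t_{n−k}(z′_k; 𝔡, Z^{(k)})·t_k(x; 𝔡, Z), where Z^{(k)} = (z_{i+k})_{i≥0}. -/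
open Polynomial

set_option linter.unusedSectionVars false

section
open Finset
variable {K : Type*} [Field K] [CharZero K] {d : Module.End K (Polynomial K)}

lemma shift_comm (hd : IsShiftInvariant d) (a : K) (p : K[X]) :
    d (aeval (X + C a) p) = aeval (X + C a) (d p) := by
  have := LinearMap.congr_fun (hd a) p
  simpa [shiftOp] using this

lemma d_pow_formula (hd : IsDeltaOperator d) (n : ℕ) :
    d (X ^ n) = ∑ j ∈ range (n + 1),
      C ((n.choose j : K) * ((d (X ^ j : K[X])).eval 0)) * X ^ (n - j) := by
  apply Polynomial.funext
  intro a
  have hL : ∀ q : K[X], (aeval (X + C a) q).eval 0 = q.eval a := fun q => by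
    rw [← comp_eq_aeval, eval_comp]; simp
  have h2 : (aeval (X + C a) (X ^ n : K[X]))
      = ∑ j ∈ range (n + 1), ((n.choose j : K) * a ^ (n - j)) • (X : K[X]) ^ j := by
    rw [map_pow, aeval_X, add_pow]
    refine Finset.sum_congr rfl fun j hj => ?_
    simp only [smul_eq_C_mul, C_mul, C_pow, C_eq_natCast]; ring
  calc (d (X ^ n)).eval a
      = (aeval (X + C a) (d (X ^ n))).eval 0 := (hL _).symm
    _ = (d (aeval (X + C a) (X ^ n))).eval 0 := by rw [shift_comm hd.1]
    _ = ∑ j ∈ range (n + 1), (n.choose j : K) * a ^ (n - j) * (d (X ^ j : K[X])).eval 0 := by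
        rw [h2, map_sum, eval_finset_sum]
        exact Finset.sum_congr rfl fun j hj => by rw [map_smul]; simp [mul_assoc]
    _ = (∑ j ∈ range (n + 1),
          C ((n.choose j : K) * ((d (X ^ j : K[X])).eval 0)) * X ^ (n - j)).eval a := by
        rw [eval_finset_sum]
        refine (Finset.sum_congr rfl fun j hj => ?_).symm
        simp only [eval_mul, eval_C, eval_pow, eval_X]
        ring
    _ = eval a (∑ j ∈ range (n + 1),
          C ((n.choose j : K) * ((d (X ^ j : K[X])).eval 0)) * X ^ (n - j)) := rfl

lemma d_C (hd : IsDeltaOperator d) (a : K) : d (C a) = 0 := by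
  obtain ⟨hs, c, hc0, hc⟩ := hd
  have h1 := shift_comm hs a X
  rw [aeval_X, hc, aeval_C] at h1
  have h2 : d X + d (C a) = C c := by rw [← map_add]; simpa using h1
  rw [hc] at h2
  linear_combination (norm := module) h2

lemma d_pow_zero (hd : IsDeltaOperator d) : d ((X : K[X]) ^ 0) = 0 := by
  have := d_C hd 1
  simpa using this

lemma d_pow_natDegree_le (hd : IsDeltaOperator d) (n : ℕ) :
    (d ((X : K[X]) ^ n)).natDegree ≤ n - 1 := by
  rw [d_pow_formula hd n]
  apply Polynomial.natDegree_sum_le_of_forall_le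
  intro j hj
  rcases Nat.eq_zero_or_pos j with rfl | hj1
  · rw [d_pow_zero hd]
    simp
  · exact (natDegree_C_mul_X_pow_le _ _).trans (by omega)

lemma d_pow_coeff (hd : IsDeltaOperator d) {c : K} (hc : d X = C c) {n : ℕ} (hn : 1 ≤ n) :
    (d ((X : K[X]) ^ n)).coeff (n - 1) = n * c := by
  rw [d_pow_formula hd n, finset_sum_coeff]
  rw [Finset.sum_eq_single 1]
  · rw [coeff_C_mul_X_pow, if_pos rfl, pow_one, hc]; simp
  · intro j hj hj1
    rw [coeff_C_mul_X_pow]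
    simp only [Finset.mem_range] at hj
    rcases Nat.eq_zero_or_pos j with rfl | hjp
    · rw [d_pow_zero hd]; simp [if_neg (by omega : ¬ n - 1 = n - 0)]
    · rw [if_neg (by omega)]
  · intro h
    simp only [Finset.mem_range] at h
    omega

lemma d_natDegree (hd : IsDeltaOperator d) {p : K[X]} (hp : 1 ≤ p.natDegree) :
    d p ≠ 0 ∧ (d p).natDegree = p.natDegree - 1 := by
  obtain ⟨c, hc0, hc⟩ := hd.2
  set m := p.natDegree with hm
  have hdp : d p = ∑ i ∈ range (m + 1), p.coeff i • d (X ^ i) := by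
    conv_lhs => rw [p.as_sum_range_C_mul_X_pow]
    rw [map_sum]
    exact Finset.sum_congr rfl fun i _ => by rw [← smul_eq_C_mul, map_smul]
  have hle : (d p).natDegree ≤ m - 1 := by
    rw [hdp]
    apply Polynomial.natDegree_sum_le_of_forall_le
    intro i hi
    refine (natDegree_smul_le _ _).trans ((d_pow_natDegree_le hd i).trans ?_)
    simp only [Finset.mem_range] at hi; omega
  have hcoeff : (d p).coeff (m - 1) = p.coeff m * (m * c) := by
    rw [hdp, finset_sum_coeff]
    rw [Finset.sum_eq_single m]
    · rw [coeff_smul, d_pow_coeff hd hc hp, smul_eq_mul]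
    · intro i hi him
      rw [coeff_smul]
      have hi' : i < m + 1 := Finset.mem_range.mp hi
      have h0 : (d ((X : K[X]) ^ i)).coeff (m - 1) = 0 := by
        rcases Nat.eq_zero_or_pos i with rfl | hip
        · rw [d_pow_zero hd]; simp
        · apply coeff_eq_zero_of_natDegree_lt
          have h2 : i - 1 < m - 1 := by omega
          exact lt_of_le_of_lt (d_pow_natDegree_le hd i) h2
      rw [h0, smul_zero]
    · simp
  have hp0 : p ≠ 0 := fun h => by rw [hm, h] at hp; simp at hp
  have hne : (d p).coeff (m - 1) ≠ 0 := by
    rw [hcoeff]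
    exact mul_ne_zero (Polynomial.leadingCoeff_ne_zero.mpr hp0)
      (mul_ne_zero (Nat.cast_ne_zero.mpr (by omega)) hc0)
  refine ⟨fun h => hne ?_, le_antisymm hle (le_natDegree_of_ne_zero hne)⟩
  rw [h, Polynomial.coeff_zero]

lemma d_iter (hd : IsDeltaOperator d) :
    ∀ (m : ℕ) (p : K[X]), p ≠ 0 → p.natDegree = m →
      (d ^ m) p ≠ 0 ∧ ((d ^ m) p).natDegree = 0 := by
  intro m
  induction m with
  | zero => intro p hp h0; simpa using ⟨hp, h0⟩
  | succ m ih =>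
    intro p hp h0
    have h1 := d_natDegree hd (p := p) (by omega)
    have h2 := ih (d p) h1.1 (by omega)
    rw [pow_succ, Module.End.mul_apply]
    exact h2

lemma d_iter_zero (hd : IsDeltaOperator d) {p : K[X]} {i : ℕ} (hi : p.natDegree < i) :
    (d ^ i) p = 0 := by
  rcases eq_or_ne p 0 with rfl | hp
  · simp
  · obtain ⟨j, rfl⟩ : ∃ j, i = j + (p.natDegree + 1) := ⟨i - (p.natDegree + 1), by omega⟩
    rw [pow_add, Module.End.mul_apply]
    have h1 : (d ^ (p.natDegree + 1)) p = 0 := by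
      rw [pow_succ', Module.End.mul_apply]
      have h2 := d_iter hd p.natDegree p hp rfl
      rw [Polynomial.eq_C_of_natDegree_eq_zero h2.2, d_C hd]
    rw [h1, map_zero]

lemma d_vanish (hd : IsDeltaOperator d) (w : ℕ → K) {r : K[X]}
    (h : ∀ i, ((d ^ i) r).eval (w i) = 0) : r = 0 := by
  by_contra hr
  have h1 := d_iter hd r.natDegree r hr rfl
  have h2 : (d ^ r.natDegree) r = C (((d ^ r.natDegree) r).coeff 0) :=
    Polynomial.eq_C_of_natDegree_eq_zero h1.2
  have h3 := h r.natDegree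
  rw [h2, eval_C] at h3
  exact h1.1 (by rw [h2, h3, map_zero])


lemma gonc_const (hd : IsDeltaOperator d) {z : ℕ → K} {t : ℕ → K[X]}
    (ht : IsGoncarovBasis d z t) (n : ℕ) : (d ^ n) (t n) = C (n.factorial : K) := by
  have hev := (ht n).2 n
  rw [if_pos rfl] at hev
  have hne : (d ^ n) (t n) ≠ 0 := fun h => by
    rw [h, eval_zero] at hev
    exact Nat.cast_ne_zero.mpr n.factorial_ne_zero hev.symm
  have htn : t n ≠ 0 := fun h => hne (by rw [h, map_zero])
  have hdeg := (d_iter hd n (t n) htn (ht n).1).2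
  rw [Polynomial.eq_C_of_natDegree_eq_zero hdeg] at hev ⊢
  rw [eval_C] at hev
  rw [hev]

lemma gonc_unique (hd : IsDeltaOperator d) {z : ℕ → K} {t : ℕ → K[X]}
    (ht : IsGoncarovBasis d z t) (n : ℕ) {p : K[X]}
    (hev : ∀ i, ((d ^ i) p).eval (z i) = if i = n then (n.factorial : K) else 0) :
    p = t n := by
  have h1 : ∀ i, ((d ^ i) (p - t n)).eval (z i) = 0 := fun i => by
    rw [map_sub, eval_sub, hev i, (ht n).2 i, sub_self]
  exact sub_eq_zero.mp (d_vanish hd z h1)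

theorem stmt16_aux (hd : IsDeltaOperator d) (z z' : ℕ → K) (k : ℕ)
    (hzk : z k ≠ z' k) (hz : ∀ i, i ≠ k → z i = z' i)
    (t t' tk : ℕ → Polynomial K)
    (ht : IsGoncarovBasis d z t) (ht' : IsGoncarovBasis d z' t')
    (htk : IsGoncarovBasis d (fun i => z (i + k)) tk) :
    (∀ n, n ≤ k → t' n = t n) ∧
    (∀ n, k < n → t' n = t n -
        (n.choose k : K) • ((tk (n - k)).eval (z' k)) • t k) := by
  constructor
  · intro n hn
    refine (gonc_unique hd ht' n ?_).symm
    intro i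
    by_cases hik : i = k
    · subst hik
      rcases eq_or_lt_of_le hn with rfl | hnk
      · rw [gonc_const hd ht n, eval_C, if_pos rfl]
      · rw [d_iter_zero hd (by rw [(ht n).1]; omega), eval_zero, if_neg (by omega)]
    · rw [← hz i hik]
      exact (ht n).2 i
  · intro n hn
    set e : K := (tk (n - k)).eval (z' k) with he
    have hkey : (((n - k).factorial : K)) • (d ^ k) (t n)
        = (n.factorial : K) • tk (n - k) := by
      have hv : ∀ i, ((d ^ i) ((((n - k).factorial : K)) • (d ^ k) (t n)
          - (n.factorial : K) • tk (n - k))).eval (z (i + k)) = 0 := by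
        intro i
        rw [map_sub, map_smul, map_smul, eval_sub, eval_smul, eval_smul]
        have h1 : (d ^ i) ((d ^ k) (t n)) = (d ^ (i + k)) (t n) := by
          rw [pow_add, Module.End.mul_apply]
        rw [h1, (ht n).2 (i + k), (htk (n - k)).2 i]
        by_cases h : i = n - k
        · subst h
          rw [if_pos (by omega), if_pos rfl]
          simp [smul_eq_mul, mul_comm]
        · rw [if_neg (by omega), if_neg h]
          simp
      exact sub_eq_zero.mp (d_vanish hd (fun i => z (i + k)) hv)
    have hek : ((d ^ k) (t n)).eval (z' k) = (n.choose k : K) * e * (k.factorial : K) := by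
      have h1 := congrArg (eval (z' k)) hkey
      rw [eval_smul, eval_smul, smul_eq_mul, smul_eq_mul, ← he] at h1
      have hch : ((n.choose k : K)) * (k.factorial : K) * ((n - k).factorial : K)
          = (n.factorial : K) := by
        rw_mod_cast [Nat.choose_mul_factorial_mul_factorial (le_of_lt hn)]
      have h2 : ((n - k).factorial : K) ≠ 0 :=
        Nat.cast_ne_zero.mpr (n - k).factorial_ne_zero
      apply mul_left_cancel₀ h2
      rw [h1, ← hch]
      ring
    have hp : ∀ i, ((d ^ i) (t n - (n.choose k : K) • e • t k)).eval (z' i)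
        = if i = n then (n.factorial : K) else 0 := by
      intro i
      rw [map_sub, map_smul, map_smul, eval_sub, eval_smul, eval_smul]
      by_cases hik : i = k
      · rw [hik]
        rw [if_neg (by omega), gonc_const hd ht k, eval_C, hek]
        simp [smul_eq_mul]
        ring
      · rw [← hz i hik, (ht n).2 i, (ht k).2 i, if_neg hik]
        simp
    exact (gonc_unique hd ht' n hp).symm

end

theorem stmt16 {K : Type*} [Field K] [CharZero K] (d : Module.End K (Polynomial K))
    (hd : IsDeltaOperator d) (z z' : ℕ → K) (k : ℕ)
    (hzk : z k ≠ z' k) (hz : ∀ i, i ≠ k → z i = z' i)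
    (t t' tk : ℕ → Polynomial K)
    (ht : IsGoncarovBasis d z t) (ht' : IsGoncarovBasis d z' t')
    (htk : IsGoncarovBasis d (fun i => z (i + k)) tk) :
    (∀ n, n ≤ k → t' n = t n) ∧
    (∀ n, k < n → t' n = t n -
        (n.choose k : K) • ((tk (n - k)).eval (z' k)) • t k) := by
  exact stmt16_aux hd z z' k hzk hz t t' tk ht ht' htk
end
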